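/- Let G be a finite group and let n be a positive integer. Then the inverse subsemigroup length of the Brandt semigroup B(G,n) satisfies l*(B(G,n)) = n(l(G) + 2) − 1. -/

import Mathlib

/-- The length of a finite group `G`: the largest `k` such that there is a strictly
increasing chain of subgroups `G₀ < G₁ < ⋯ < G_k` of `G`. -/
noncomputable def groupLength (G : Type*) [Group G] : ℕ :=
  sSup {k : ℕ | ∃ c : Fin (k + 1) → Subgroup G, StrictMono c}

/-- The Brandt semigroup `B(G,n)`: elements `({1,…,n} × G × {1,…,n}) ∪ {0}`, with the
zero represented by `none`. -/
def Brandt (G : Type*) (n : ℕ) : Type _ :=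
  Option (Fin n × G × Fin n)

/-- Multiplication in the Brandt semigroup:
`(i,g,j)(k,h,l) = (i,gh,l)` if `j = k` and `0` otherwise; `0` is absorbing. -/
instance {G : Type*} [Mul G] {n : ℕ} : Mul (Brandt G n) :=
  ⟨fun a b =>
    match a, b with
    | some (i, g, j), some (k, h, l) =>
        if j = k then (some (i, g * h, l) : Brandt G n) else (none : Brandt G n)
    | _, _ => (none : Brandt G n)⟩

/-- The (unique, semigroup-theoretic) inverse of an element of the Brandt semigroup:
`(i,g,j)⁻¹ = (j,g⁻¹,i)` and `0⁻¹ = 0`. -/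
def brandtInv {G : Type*} [Group G] {n : ℕ} : Brandt G n → Brandt G n
  | none => (none : Brandt G n)
  | some (i, g, j) => (some (j, g⁻¹, i) : Brandt G n)

/-- The inverse subsemigroup length `l*` of the Brandt semigroup: the largest `k` for
which there is a strictly increasing chain of `k + 1` non-empty inverse subsemigroups
(subsemigroups closed under the inverse operation). -/
noncomputable def brandtInverseLength (G : Type*) [Group G] (n : ℕ) : ℕ :=
  sSup {k : ℕ | ∃ c : Fin (k + 1) → Subsemigroup (Brandt G n),
    StrictMono c ∧ ∀ i, ((c i : Set (Brandt G n))).Nonempty ∧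
      ∀ x ∈ c i, brandtInv x ∈ c i}


set_option linter.unusedSectionVars false
set_option maxHeartbeats 1000000

section SubLen
variable {G : Type*} [Group G] [Fintype G]

/-- Length of the longest strict chain of subgroups ending exactly at `H`. -/
noncomputable def subLen (H : Subgroup G) : ℕ :=
  sSup {k : ℕ | ∃ c : Fin (k + 1) → Subgroup G, StrictMono c ∧ c (Fin.last k) = H}

lemma subLen_chain_bound {k : ℕ} (c : Fin (k + 1) → Subgroup G) (hc : StrictMono c) :
    k ≤ Nat.card (Subgroup G) := by
  have := Nat.card_le_card_of_injective c hc.injective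
  simp only [Nat.card_eq_fintype_card, Fintype.card_fin] at this ⊢
  omega

lemma subLen_set_nonempty (H : Subgroup G) :
    {k : ℕ | ∃ c : Fin (k + 1) → Subgroup G, StrictMono c ∧ c (Fin.last k) = H}.Nonempty :=
  ⟨0, fun _ => H, fun a b h => absurd (Fin.lt_iff_val_lt_val.mp h) (by omega), rfl⟩

lemma subLen_set_bdd (H : Subgroup G) :
    BddAbove {k : ℕ | ∃ c : Fin (k + 1) → Subgroup G, StrictMono c ∧ c (Fin.last k) = H} :=
  ⟨Nat.card (Subgroup G), fun _ ⟨c, hc, _⟩ => subLen_chain_bound c hc⟩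

lemma subLen_spec (H : Subgroup G) :
    ∃ c : Fin (subLen H + 1) → Subgroup G, StrictMono c ∧ c (Fin.last _) = H :=
  Nat.sSup_mem (subLen_set_nonempty H) (subLen_set_bdd H)

lemma le_subLen {k : ℕ} {H : Subgroup G} (c : Fin (k + 1) → Subgroup G)
    (hc : StrictMono c) (hH : c (Fin.last k) = H) : k ≤ subLen H :=
  le_csSup (subLen_set_bdd H) ⟨c, hc, hH⟩

/-- Append an element to a chain. -/
def snocChain {k : ℕ} {α : Type*} (c : Fin (k + 1) → α) (x : α) : Fin (k + 2) → α :=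
  fun t => if h : t.val < k + 1 then c ⟨t.val, h⟩ else x

lemma snocChain_last {k : ℕ} {α : Type*} (c : Fin (k + 1) → α) (x : α) :
    snocChain c x (Fin.last (k + 1)) = x := by
  simp [snocChain]

lemma strictMono_snocChain {k : ℕ} {α : Type*} [Preorder α] (c : Fin (k + 1) → α) (x : α)
    (hc : StrictMono c) (hx : c (Fin.last k) < x) : StrictMono (snocChain c x) := by
  rw [Fin.strictMono_iff_lt_succ]
  intro i
  have hic : (i.castSucc : Fin (k + 2)).val = i.val := rfl
  have his : (i.succ : Fin (k + 2)).val = i.val + 1 := rfl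
  have hi : i.val < k + 1 := i.isLt
  by_cases h : i.val + 1 < k + 1
  · have : snocChain c x i.castSucc = c ⟨i.val, hi⟩ := dif_pos hi
    rw [this]
    have : snocChain c x i.succ = c ⟨i.val + 1, h⟩ := dif_pos h
    rw [this]
    exact hc (by simp [Fin.lt_iff_val_lt_val])
  · have hik : i.val = k := by omega
    have h1 : snocChain c x i.castSucc = c ⟨i.val, hi⟩ := dif_pos hi
    have h2 : snocChain c x i.succ = x := dif_neg h
    rw [h1, h2]
    have : (⟨i.val, hi⟩ : Fin (k + 1)) = Fin.last k := by
      simp [Fin.last, hik]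
    rw [this]; exact hx

lemma subLen_lt_subLen {H K : Subgroup G} (h : H < K) : subLen H < subLen K := by
  obtain ⟨c, hc, hH⟩ := subLen_spec H
  have : subLen H + 1 ≤ subLen K := by
    refine le_subLen (snocChain c K) (strictMono_snocChain c K hc (by rw [hH]; exact h)) ?_
    exact snocChain_last c K
  omega

lemma subLen_mono {H K : Subgroup G} (h : H ≤ K) : subLen H ≤ subLen K := by
  rcases eq_or_lt_of_le h with rfl | h
  · rfl
  · exact (subLen_lt_subLen h).le

lemma subLen_le_top (H : Subgroup G) : subLen H ≤ subLen (⊤ : Subgroup G) :=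
  subLen_mono le_top

lemma groupLength_eq_subLen_top : groupLength G = subLen (⊤ : Subgroup G) := by
  have hne : {k : ℕ | ∃ c : Fin (k + 1) → Subgroup G, StrictMono c}.Nonempty :=
    ⟨0, fun _ => ⊤, fun a b h => absurd (Fin.lt_iff_val_lt_val.mp h) (by omega)⟩
  apply le_antisymm
  · apply csSup_le hne
    rintro k ⟨c, hc⟩
    rcases eq_or_lt_of_le (le_top : c (Fin.last k) ≤ ⊤) with h | h
    · exact le_subLen c hc h
    · have : k + 1 ≤ subLen (⊤ : Subgroup G) :=
        le_subLen (snocChain c ⊤) (strictMono_snocChain c ⊤ hc h) (snocChain_last c ⊤)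
      omega
  · obtain ⟨c, hc, -⟩ := subLen_spec (⊤ : Subgroup G)
    exact le_csSup ⟨Nat.card (Subgroup G), fun _ ⟨c, hc⟩ => subLen_chain_bound c hc⟩ ⟨c, hc⟩

end SubLen


section Weight
open Classical
variable {G : Type*} [Group G] [Fintype G] {n : ℕ}

/-- Handy constructor for nonzero elements of the Brandt semigroup. -/
def bel (i : Fin n) (g : G) (j : Fin n) : Brandt G n := some (i, g, j)

/-- The zero of the Brandt semigroup. -/
def bz : Brandt G n := none

@[simp] lemma brandt_mul_bel (i : Fin n) (g : G) (j k : Fin n) (h : G) (m : Fin n) :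
    bel i g j * bel k h m = if j = k then bel i (g * h) m else (bz : Brandt G n) := rfl

@[simp] lemma brandt_mul_bz_left (x : Brandt G n) : bz * x = bz := rfl

@[simp] lemma brandt_mul_bz_right (x : Brandt G n) : x * bz = bz := by
  show (Mul.mul x bz) = bz
  cases x with
  | none => rfl
  | some a => obtain ⟨i, g, j⟩ := a; rfl

@[simp] lemma brandtInv_bel (i : Fin n) (g : G) (j : Fin n) :
    brandtInv (bel i g j) = bel j g⁻¹ i := rfl

@[simp] lemma brandtInv_bz : brandtInv (bz : Brandt G n) = bz := rfl

/-- `S` is closed under the inverse operation. -/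
def IsInv (S : Subsemigroup (Brandt G n)) : Prop := ∀ x ∈ S, brandtInv x ∈ S

/-- The subgroup of `G` sitting at the diagonal idempotent `(i,·,i)`. -/
noncomputable def diagSub (S : Subsemigroup (Brandt G n)) (i : Fin n) : Subgroup G :=
  Subgroup.closure {g : G | bel i g i ∈ S}

/-- Index `i` is connected in `S` to a strictly smaller index. -/
def Conn (S : Subsemigroup (Brandt G n)) (i : Fin n) : Prop :=
  ∃ j : Fin n, j < i ∧ ∃ g : G, bel i g j ∈ S

/-- The weight of `S` at index `i`. -/
noncomputable def wt (S : Subsemigroup (Brandt G n)) (i : Fin n) : ℕ :=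
  if bel i 1 i ∈ S then
    if Conn S i then subLen (⊤ : Subgroup G) + 2 else subLen (diagSub S i) + 1
  else 0

/-- Total weight of `S`. -/
noncomputable def W (S : Subsemigroup (Brandt G n)) : ℕ :=
  (if (bz : Brandt G n) ∈ S then 1 else 0) + ∑ i : Fin n, wt S i

lemma mem_diagSub {S : Subsemigroup (Brandt G n)} (hS : IsInv S) {i : Fin n}
    (he : bel i 1 i ∈ S) (g : G) :
    g ∈ diagSub S i ↔ bel i g i ∈ S := by
  have hH : ∃ H : Subgroup G, (H : Set G) = {g : G | bel i g i ∈ S} := by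
    refine ⟨{ carrier := {g : G | bel i g i ∈ S}
              one_mem' := he
              mul_mem' := ?_
              inv_mem' := ?_ }, rfl⟩
    · intro a b ha hb
      have := S.mul_mem ha hb
      simpa using this
    · intro a ha
      have := hS _ ha
      simpa using this
  obtain ⟨H, hH⟩ := hH
  unfold diagSub
  rw [← hH, Subgroup.closure_eq]
  rw [← SetLike.mem_coe, hH]; rfl

lemma diagSub_mono {S T : Subsemigroup (Brandt G n)} (h : S ≤ T) (i : Fin n) :
    diagSub S i ≤ diagSub T i :=
  Subgroup.closure_mono (fun g hg => h hg)

lemma wt_mono {S T : Subsemigroup (Brandt G n)} (h : S ≤ T) (i : Fin n) :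
    wt S i ≤ wt T i := by
  unfold wt
  by_cases he : (bel i 1 i : Brandt G n) ∈ S
  · rw [if_pos he, if_pos (h he)]
    by_cases hc : Conn S i
    · have hcT : Conn T i := by
        obtain ⟨j, hj, g, hg⟩ := hc; exact ⟨j, hj, g, h hg⟩
      rw [if_pos hc, if_pos hcT]
    · rw [if_neg hc]
      by_cases hcT : Conn T i
      · rw [if_pos hcT]
        have := subLen_le_top (diagSub S i)
        omega
      · rw [if_neg hcT]
        have := subLen_mono (diagSub_mono h i)
        omega
  · rw [if_neg he]; omega

lemma wt_pos {T : Subsemigroup (Brandt G n)} {i : Fin n}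
    (he : (bel i 1 i : Brandt G n) ∈ T) : 1 ≤ wt T i := by
  unfold wt
  rw [if_pos he]
  split <;> omega

lemma wt_ge_diag {T : Subsemigroup (Brandt G n)} {i : Fin n}
    (he : (bel i 1 i : Brandt G n) ∈ T) : subLen (diagSub T i) + 1 ≤ wt T i := by
  unfold wt
  rw [if_pos he]
  have := subLen_le_top (diagSub T i)
  split <;> omega

lemma wt_eq_of_conn {T : Subsemigroup (Brandt G n)} {i : Fin n}
    (he : (bel i 1 i : Brandt G n) ∈ T) (hc : Conn T i) :
    wt T i = subLen (⊤ : Subgroup G) + 2 := by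
  unfold wt; rw [if_pos he, if_pos hc]

lemma wt_le_of_not_conn {S : Subsemigroup (Brandt G n)} {i : Fin n} (hc : ¬ Conn S i) :
    wt S i ≤ subLen (⊤ : Subgroup G) + 1 := by
  unfold wt
  have h1 := subLen_le_top (diagSub S i)
  by_cases he : (bel i 1 i : Brandt G n) ∈ S
  · rw [if_pos he, if_neg hc]; omega
  · rw [if_neg he]; omega

lemma idem_left_mem {T : Subsemigroup (Brandt G n)} (hT : IsInv T) {i j : Fin n} {g : G}
    (hx : bel i g j ∈ T) : bel i 1 i ∈ T := by
  have := T.mul_mem hx (hT _ hx)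
  simpa using this

lemma idem_right_mem {T : Subsemigroup (Brandt G n)} (hT : IsInv T) {i j : Fin n} {g : G}
    (hx : bel i g j ∈ T) : bel j 1 j ∈ T := by
  have := T.mul_mem (hT _ hx) hx
  simpa using this

end Weight

section Key
open Classical
variable {G : Type*} [Group G] [Fintype G] {n : ℕ}

lemma exists_wt_lt_aux {S T : Subsemigroup (Brandt G n)} (hS : IsInv S) (hT : IsInv T)
    (hle : S ≤ T) :
    ∀ m : ℕ, ∀ (i j : Fin n) (g : G), j ≤ i → i.val ≤ m →
      bel i g j ∈ T → bel i g j ∉ S → ∃ p : Fin n, wt S p < wt T p := by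
  intro m
  induction m using Nat.strong_induction_on with
  | _ m IH =>
  intro i j g hji him hxT hxS
  have heiT : bel i 1 i ∈ T := idem_left_mem hT hxT
  have hejT : bel j 1 j ∈ T := idem_right_mem hT hxT
  by_cases heiS : bel i 1 i ∈ S
  swap
  · refine ⟨i, ?_⟩
    have h0 : wt S i = 0 := by unfold wt; rw [if_neg heiS]
    have h1 := wt_pos heiT
    omega
  by_cases hejS : bel j 1 j ∈ S
  swap
  · refine ⟨j, ?_⟩
    have h0 : wt S j = 0 := by unfold wt; rw [if_neg hejS]
    have h1 := wt_pos hejT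
    omega
  by_cases hij : j = i
  · subst hij
    by_cases hconn : Conn S j
    · obtain ⟨k, hk, h, hhS⟩ := hconn
      have hkv : k.val < j.val := hk
      have h1 : bel k h⁻¹ j ∈ T := by
        have := hS _ hhS; rw [brandtInv_bel] at this; exact hle this
      have hyT : bel k (h⁻¹ * g * h) k ∈ T := by
        have := T.mul_mem (T.mul_mem h1 hxT) (hle hhS)
        simpa using this
      have hyS : bel k (h⁻¹ * g * h) k ∉ S := by
        intro hy
        apply hxS
        have h2 := S.mul_mem (S.mul_mem hhS hy) (hS _ hhS)
        have h3 : h * (h⁻¹ * g * h) * h⁻¹ = g := by group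
        simpa [h3] using h2
      exact IH k.val (by omega) k k _ le_rfl le_rfl hyT hyS
    · refine ⟨j, ?_⟩
      have hdlt : diagSub S j < diagSub T j := by
        apply lt_of_le_of_ne (diagSub_mono hle j)
        intro hEq
        apply hxS
        rw [← mem_diagSub hS heiS g, hEq, mem_diagSub hT heiT g]
        exact hxT
      have h1 := subLen_lt_subLen hdlt
      have h2 : wt S j = subLen (diagSub S j) + 1 := by
        unfold wt; rw [if_pos heiS, if_neg hconn]
      have h3 := wt_ge_diag heiT
      omega
  · have hjlt : j < i := lt_of_le_of_ne hji hij
    have hjv : j.val < i.val := hjlt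
    by_cases hconn : Conn S i
    · obtain ⟨k, hk, h, hhS⟩ := hconn
      have hkv : k.val < i.val := hk
      have hyT : bel j (g⁻¹ * h) k ∈ T := by
        have h1 : bel j g⁻¹ i ∈ T := by
          have := hT _ hxT; rw [brandtInv_bel] at this; exact this
        have := T.mul_mem h1 (hle hhS)
        simpa using this
      have hyS : bel j (g⁻¹ * h) k ∉ S := by
        intro hy
        apply hxS
        have h2 := S.mul_mem hhS (hS _ hy)
        have h3 : h * (g⁻¹ * h)⁻¹ = g := by group
        simpa [h3] using h2
      rcases le_total k j with hkj | hjk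
      · exact IH (i.val - 1) (by omega) j k _ hkj (by omega) hyT hyS
      · have hyT' : bel k (g⁻¹ * h)⁻¹ j ∈ T := by
          have := hT _ hyT; rw [brandtInv_bel] at this; exact this
        have hyS' : bel k (g⁻¹ * h)⁻¹ j ∉ S := by
          intro hy
          apply hyS
          have := hS _ hy; rw [brandtInv_bel, inv_inv] at this; exact this
        exact IH (i.val - 1) (by omega) k j _ hjk (by omega) hyT' hyS'
    · refine ⟨i, ?_⟩
      have h1 : wt S i ≤ subLen (⊤ : Subgroup G) + 1 := wt_le_of_not_conn hconn
      have h2 : wt T i = subLen (⊤ : Subgroup G) + 2 :=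
        wt_eq_of_conn heiT ⟨j, hjlt, g, hxT⟩
      omega

lemma exists_wt_lt {S T : Subsemigroup (Brandt G n)} (hS : IsInv S) (hT : IsInv T)
    (hle : S ≤ T) (i j : Fin n) (g : G) (hxT : bel i g j ∈ T) (hxS : bel i g j ∉ S) :
    ∃ p : Fin n, wt S p < wt T p := by
  rcases le_total j i with h | h
  · exact exists_wt_lt_aux hS hT hle i.val i j g h le_rfl hxT hxS
  · have hT' : bel j g⁻¹ i ∈ T := by
      have := hT _ hxT; rw [brandtInv_bel] at this; exact this
    have hS' : bel j g⁻¹ i ∉ S := by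
      intro hy
      apply hxS
      have := hS _ hy; rw [brandtInv_bel, inv_inv] at this; exact this
    exact exists_wt_lt_aux hS hT hle j.val j i g⁻¹ h le_rfl hT' hS'

end Key

section WBounds
open Classical
variable {G : Type*} [Group G] [Fintype G] {n : ℕ}

lemma wt_le_generic (S : Subsemigroup (Brandt G n)) (i : Fin n) :
    wt S i ≤ subLen (⊤ : Subgroup G) + 2 := by
  unfold wt
  have := subLen_le_top (diagSub S i)
  split
  · split <;> omega
  · omega

lemma W_lt {S T : Subsemigroup (Brandt G n)} (hS : IsInv S) (hT : IsInv T) (h : S < T) :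
    W S < W T := by
  obtain ⟨x, hxT, hxS⟩ := SetLike.exists_of_lt h
  have hle : S ≤ T := h.le
  have hsum : ∑ i : Fin n, wt S i ≤ ∑ i : Fin n, wt T i :=
    Finset.sum_le_sum (fun i _ => wt_mono hle i)
  cases x with
  | none =>
    have hzS : (bz : Brandt G n) ∉ S := hxS
    have hzT : (bz : Brandt G n) ∈ T := hxT
    unfold W
    rw [if_neg hzS, if_pos hzT]
    omega
  | some a =>
    obtain ⟨i, g, j⟩ := a
    obtain ⟨p, hp⟩ := exists_wt_lt hS hT hle i j g hxT hxS
    have hsum' : ∑ i : Fin n, wt S i < ∑ i : Fin n, wt T i :=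
      Finset.sum_lt_sum (fun i _ => wt_mono hle i) ⟨p, Finset.mem_univ p, hp⟩
    unfold W
    have hind : (if (bz : Brandt G n) ∈ S then 1 else 0) ≤
        (if (bz : Brandt G n) ∈ T then 1 else 0) := by
      by_cases hz : (bz : Brandt G n) ∈ S
      · rw [if_pos hz, if_pos (hle hz)]
      · rw [if_neg hz]; omega
    omega

lemma W_pos {S : Subsemigroup (Brandt G n)} (hS : IsInv S)
    (hne : (S : Set (Brandt G n)).Nonempty) : 1 ≤ W S := by
  obtain ⟨x, hx⟩ := hne
  cases x with
  | none =>
    unfold W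
    rw [if_pos (by exact hx : (bz : Brandt G n) ∈ S)]
    omega
  | some a =>
    obtain ⟨i, g, j⟩ := a
    have h1 : 1 ≤ wt S i := wt_pos (idem_left_mem hS hx)
    have h2 : wt S i ≤ ∑ p : Fin n, wt S p :=
      Finset.single_le_sum (fun p _ => Nat.zero_le _) (Finset.mem_univ i)
    unfold W
    omega

lemma W_le (hn : 0 < n) (S : Subsemigroup (Brandt G n)) :
    W S ≤ n * (subLen (⊤ : Subgroup G) + 2) := by
  obtain ⟨m, rfl⟩ : ∃ m, n = m + 1 := ⟨n - 1, by omega⟩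
  have h0 : wt S 0 ≤ subLen (⊤ : Subgroup G) + 1 := by
    apply wt_le_of_not_conn
    rintro ⟨j, hj, -⟩
    exact absurd hj (Fin.not_lt_zero j)
  have hrest : ∑ i : Fin m, wt S i.succ ≤ m * (subLen (⊤ : Subgroup G) + 2) := by
    calc ∑ i : Fin m, wt S i.succ ≤ ∑ _i : Fin m, (subLen (⊤ : Subgroup G) + 2) :=
          Finset.sum_le_sum (fun i _ => wt_le_generic S i.succ)
      _ = m * (subLen (⊤ : Subgroup G) + 2) := by
          rw [Finset.sum_const, Finset.card_univ, Fintype.card_fin, smul_eq_mul]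
  have hsum : ∑ i : Fin (m + 1), wt S i = wt S 0 + ∑ i : Fin m, wt S i.succ :=
    Fin.sum_univ_succ _
  unfold W
  have hind : (if (bz : Brandt G (m + 1)) ∈ S then 1 else 0) ≤ 1 := by split <;> omega
  rw [hsum]
  have hexp : (m + 1) * (subLen (⊤ : Subgroup G) + 2)
      = m * (subLen (⊤ : Subgroup G) + 2) + (subLen (⊤ : Subgroup G) + 2) := by ring
  rw [hexp]
  generalize m * (subLen (⊤ : Subgroup G) + 2) = A at hrest ⊢
  omega

lemma strictMono_fin_nat {k : ℕ} {f : Fin (k + 1) → ℕ} (hf : StrictMono f) :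
    f 0 + k ≤ f (Fin.last k) := by
  suffices h : ∀ v (hv : v < k + 1), f 0 + v ≤ f ⟨v, hv⟩ by
    exact h k (by omega)
  intro v
  induction v with
  | zero => intro hv; simp [show (⟨0, hv⟩ : Fin (k+1)) = 0 from rfl]
  | succ w ih =>
    intro hv
    have h1 := ih (by omega)
    have h2 : f ⟨w, by omega⟩ < f ⟨w + 1, hv⟩ := hf (by simp [Fin.lt_iff_val_lt_val])
    omega

end WBounds

section Construction
open Classical
variable {G : Type*} [Group G] [Fintype G] {n : ℕ}

@[simp] lemma bel_ne_bz (i : Fin n) (g : G) (j : Fin n) : bel i g j ≠ bz := by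
  exact Option.some_ne_none _

lemma bel_inj {i i' j j' : Fin n} {g g' : G} (h : bel i g j = bel i' g' j') :
    i = i' ∧ g = g' ∧ j = j' := by
  have h' : (some (i, g, j) : Option (Fin n × G × Fin n)) = some (i', g', j') := h
  simp only [Option.some.injEq, Prod.mk.injEq] at h'
  exact ⟨h'.1, h'.2.1, h'.2.2⟩

lemma succ_div_mod_of_eq {l t : ℕ} (h : t % (l + 2) = l + 1) :
    (t + 1) / (l + 2) = t / (l + 2) + 1 ∧ (t + 1) % (l + 2) = 0 := by
  have hd := Nat.div_add_mod t (l + 2)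
  have h1 : t + 1 = (l + 2) * (t / (l + 2) + 1) := by
    rw [Nat.mul_add, Nat.mul_one]; omega
  constructor
  · rw [h1, Nat.mul_div_cancel_left _ (by omega : 0 < l + 2)]
  · rw [h1, Nat.mul_mod_right]

lemma succ_div_mod_of_lt {l t : ℕ} (h : t % (l + 2) < l + 1) :
    (t + 1) / (l + 2) = t / (l + 2) ∧ (t + 1) % (l + 2) = t % (l + 2) + 1 := by
  have hd := Nat.div_add_mod t (l + 2)
  have h1 : t + 1 = (l + 2) * (t / (l + 2)) + (t % (l + 2) + 1) := by
    rw [← Nat.add_assoc, hd]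
  constructor
  · rw [h1, Nat.mul_add_div (by omega : 0 < l + 2),
      Nat.div_eq_of_lt (show t % (l + 2) + 1 < l + 2 by omega), Nat.add_zero]
  · rw [h1, Nat.mul_add_mod, Nat.mod_eq_of_lt (by omega)]

/-- The membership condition for the explicit maximal chain, at period `a`, step `b`. -/
def chainCond (l : ℕ) (c' : ℕ → Subgroup G) (a b : ℕ) (i : Fin n) (g : G) (j : Fin n) :
    Prop :=
  (i.val < a ∧ j.val < a)
  ∨ (1 ≤ a ∧ b = l + 1 ∧ i.val ≤ a ∧ j.val ≤ a)
  ∨ (j = i ∧ i.val = a ∧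
      ((a = 0 ∧ 1 ≤ b ∧ g ∈ c' (b - 1)) ∨ (1 ≤ a ∧ b ≤ l ∧ g ∈ c' b)))

lemma chainCond_mul {l : ℕ} {c' : ℕ → Subgroup G} {a b : ℕ} {i j m : Fin n} {g h : G}
    (h1 : chainCond l c' a b i g j) (h2 : chainCond l c' a b j h m) :
    chainCond l c' a b i (g * h) m := by
  unfold chainCond at *
  rcases h1 with ⟨hi, hj⟩ | ⟨ha, hb, hi, hj⟩ | ⟨hji, hi, hd⟩ <;>
    rcases h2 with ⟨hj', hm⟩ | ⟨ha', hb', hj', hm⟩ | ⟨hmj, hj2, hd'⟩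
  · exact Or.inl ⟨hi, hm⟩
  · exact Or.inr (Or.inl ⟨ha', hb', le_of_lt hi, hm⟩)
  · subst hmj; rw [hj2] at hj; omega
  · exact Or.inr (Or.inl ⟨ha, hb, hi, le_of_lt hm⟩)
  · exact Or.inr (Or.inl ⟨ha, hb, hi, hm⟩)
  · subst hmj
    rcases hd' with ⟨ha0, -, -⟩ | ⟨-, hbl, -⟩ <;> omega
  · subst hji; rw [hi] at hj'; omega
  · subst hji
    rcases hd with ⟨ha0, -, -⟩ | ⟨-, hbl, -⟩ <;> omega
  · subst hji; subst hmj
    refine Or.inr (Or.inr ⟨rfl, hi, ?_⟩)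
    rcases hd with ⟨ha0, hb1, hg⟩ | ⟨ha1, hbl, hg⟩ <;>
      rcases hd' with ⟨ha0', hb1', hh⟩ | ⟨ha1', hbl', hh⟩
    · exact Or.inl ⟨ha0, hb1, mul_mem hg hh⟩
    · omega
    · omega
    · exact Or.inr ⟨ha1, hbl, mul_mem hg hh⟩

lemma chainCond_inv {l : ℕ} {c' : ℕ → Subgroup G} {a b : ℕ} {i j : Fin n} {g : G}
    (h1 : chainCond l c' a b i g j) : chainCond l c' a b j g⁻¹ i := by
  unfold chainCond at *
  rcases h1 with ⟨hi, hj⟩ | ⟨ha, hb, hi, hj⟩ | ⟨hji, hi, hd⟩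
  · exact Or.inl ⟨hj, hi⟩
  · exact Or.inr (Or.inl ⟨ha, hb, hj, hi⟩)
  · subst hji
    refine Or.inr (Or.inr ⟨rfl, hi, ?_⟩)
    rcases hd with ⟨ha0, hb1, hg⟩ | ⟨ha1, hbl, hg⟩
    · exact Or.inl ⟨ha0, hb1, inv_mem hg⟩
    · exact Or.inr ⟨ha1, hbl, inv_mem hg⟩

/-- The subsemigroups of the explicit maximal chain. -/
def chainS (l : ℕ) (c' : ℕ → Subgroup G) (a b : ℕ) : Subsemigroup (Brandt G n) where
  carrier := {x | x = bz ∨ ∃ i g j, x = bel i g j ∧ chainCond l c' a b i g j}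
  mul_mem' := by
    rintro x y (rfl | ⟨i, g, j, rfl, hC⟩) hb
    · left; rfl
    · rcases hb with rfl | ⟨k, h, m, rfl, hC'⟩
      · left; exact brandt_mul_bz_right _
      · by_cases hjk : j = k
        · subst hjk
          right
          refine ⟨i, g * h, m, ?_, chainCond_mul hC hC'⟩
          rw [brandt_mul_bel, if_pos rfl]
        · left; rw [brandt_mul_bel, if_neg hjk]

lemma chainS_isInv (l : ℕ) (c' : ℕ → Subgroup G) (a b : ℕ) :
    IsInv (chainS (n := n) l c' a b) := by
  rintro x (rfl | ⟨i, g, j, rfl, hC⟩)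
  · left; rfl
  · right
    exact ⟨j, g⁻¹, i, by rw [brandtInv_bel], chainCond_inv hC⟩

lemma chainS_nonempty (l : ℕ) (c' : ℕ → Subgroup G) (a b : ℕ) :
    ((chainS (n := n) l c' a b : Set (Brandt G n))).Nonempty :=
  ⟨bz, Or.inl rfl⟩

lemma chainS_mono (l : ℕ) (c' : ℕ → Subgroup G) (hm : Monotone c') (a b a' b' : ℕ)
    (hstep : (b ≤ l ∧ a' = a ∧ b' = b + 1) ∨ (b = l + 1 ∧ a' = a + 1 ∧ b' = 0)) :
    chainS (n := n) l c' a b ≤ chainS l c' a' b' := by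
  rintro x (rfl | ⟨i, g, j, rfl, hC⟩)
  · left; rfl
  · right
    refine ⟨i, g, j, rfl, ?_⟩
    unfold chainCond at *
    rcases hstep with ⟨hbs, ha's, hb's⟩ | ⟨hbs, ha's, hb's⟩
    · -- same period, next step
      rcases hC with ⟨hi, hj⟩ | ⟨ha, hb', hi, hj⟩ | ⟨hji, hi, hd⟩
      · exact Or.inl ⟨by omega, by omega⟩
      · omega
      · subst hji
        rcases hd with ⟨ha0, hb1, hg⟩ | ⟨ha1, hbl, hg⟩
        · refine Or.inr (Or.inr ⟨rfl, by omega, Or.inl ⟨by omega, by omega, ?_⟩⟩)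
          exact hm (by omega : b - 1 ≤ b' - 1) hg
        · by_cases hbl' : b < l
          · refine Or.inr (Or.inr ⟨rfl, by omega, Or.inr ⟨by omega, by omega, ?_⟩⟩)
            exact hm (by omega : b ≤ b') hg
          · exact Or.inr (Or.inl ⟨by omega, by omega, by omega, by omega⟩)
    · -- new period
      rcases hC with ⟨hi, hj⟩ | ⟨ha, hb', hi, hj⟩ | ⟨hji, hi, hd⟩
      · exact Or.inl ⟨by omega, by omega⟩
      · exact Or.inl ⟨by omega, by omega⟩
      · subst hji
        rcases hd with ⟨ha0, hb1, hg⟩ | ⟨ha1, hbl, hg⟩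
        · exact Or.inl ⟨by omega, by omega⟩
        · omega

end Construction

section Strict
open Classical
variable {G : Type*} [Group G] [Fintype G] {n : ℕ}

lemma chainS_lt (l : ℕ) (c' : ℕ → Subgroup G) (hm : Monotone c')
    (hsm : ∀ b, b < l → c' b < c' (b + 1)) (hn : 0 < n) (a b a' b' : ℕ)
    (hstep : (b ≤ l ∧ a' = a ∧ b' = b + 1) ∨ (b = l + 1 ∧ a' = a + 1 ∧ b' = 0))
    (han : a' < n) :
    chainS (n := n) l c' a b < chainS l c' a' b' := by
  rw [SetLike.lt_iff_le_and_exists]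
  refine ⟨chainS_mono l c' hm a b a' b' hstep, ?_⟩
  rcases hstep with ⟨hbs, ha's, hb's⟩ | ⟨hbs, ha's, hb's⟩
  · -- same period
    rw [ha's] at han
    rw [ha's, hb's]
    by_cases ha0 : a = 0
    · by_cases hb0 : b = 0
      · have hcond : chainCond (n := n) l c' a (b + 1) ⟨0, hn⟩ (1 : G) ⟨0, hn⟩ :=
          Or.inr (Or.inr ⟨rfl, show (0 : ℕ) = a by omega, Or.inl ⟨by omega, by omega, one_mem _⟩⟩)
        refine ⟨bel ⟨0, hn⟩ 1 ⟨0, hn⟩, Or.inr ⟨_, _, _, rfl, hcond⟩, ?_⟩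
        rintro (habs | ⟨i, g', j, habs, hC⟩)
        · exact bel_ne_bz _ _ _ habs
        · obtain ⟨hi, -, -⟩ := bel_inj habs
          have hiv : (0 : ℕ) = i.val := congrArg Fin.val hi
          rcases hC with ⟨h1, -⟩ | ⟨h1, -, -, -⟩ | ⟨-, -, ⟨-, h1, -⟩ | ⟨h1, -, -⟩⟩ <;> omega
      · have hbub : b - 1 < l := by omega
        obtain ⟨g, hgT, hgS⟩ := SetLike.exists_of_lt (hsm _ hbub)
        rw [show b - 1 + 1 = b by omega] at hgT
        have hcond : chainCond (n := n) l c' a (b + 1) ⟨0, hn⟩ g ⟨0, hn⟩ :=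
          Or.inr (Or.inr ⟨rfl, show (0 : ℕ) = a by omega, Or.inl ⟨by omega, by omega,
            by rw [Nat.add_sub_cancel]; exact hgT⟩⟩)
        refine ⟨bel ⟨0, hn⟩ g ⟨0, hn⟩, Or.inr ⟨_, _, _, rfl, hcond⟩, ?_⟩
        rintro (habs | ⟨i, g', j, habs, hC⟩)
        · exact bel_ne_bz _ _ _ habs
        · obtain ⟨hi, hg, -⟩ := bel_inj habs
          have hiv : (0 : ℕ) = i.val := congrArg Fin.val hi
          subst hg
          rcases hC with ⟨h1, -⟩ | ⟨h1, -, -, -⟩ | ⟨-, -, ⟨-, -, h1⟩ | ⟨h1, -, -⟩⟩ <;>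
            first
              | omega
              | exact hgS h1
    · by_cases hbl : b = l
      · have hcond : chainCond (n := n) l c' a (b + 1) ⟨a, han⟩ (1 : G) ⟨0, hn⟩ :=
          Or.inr (Or.inl ⟨by omega, by omega, by exact (by omega : a ≤ a),
            by exact (by omega : (0 : ℕ) ≤ a)⟩)
        refine ⟨bel ⟨a, han⟩ 1 ⟨0, hn⟩, Or.inr ⟨_, _, _, rfl, hcond⟩, ?_⟩
        rintro (habs | ⟨i, g', j, habs, hC⟩)
        · exact bel_ne_bz _ _ _ habs
        · obtain ⟨hi, -, hj⟩ := bel_inj habs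
          have hiv : a = i.val := congrArg Fin.val hi
          have hjv : (0 : ℕ) = j.val := congrArg Fin.val hj
          rcases hC with ⟨h1, -⟩ | ⟨-, h1, -, -⟩ | ⟨h1, h2, -⟩ <;> [omega; omega; skip]
          have := congrArg Fin.val h1
          omega
      · have hbub : b < l := by omega
        obtain ⟨g, hgT, hgS⟩ := SetLike.exists_of_lt (hsm _ hbub)
        have hcond : chainCond (n := n) l c' a (b + 1) ⟨a, han⟩ g ⟨a, han⟩ :=
          Or.inr (Or.inr ⟨rfl, rfl, Or.inr ⟨by omega, by omega, hgT⟩⟩)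
        refine ⟨bel ⟨a, han⟩ g ⟨a, han⟩, Or.inr ⟨_, _, _, rfl, hcond⟩, ?_⟩
        rintro (habs | ⟨i, g', j, habs, hC⟩)
        · exact bel_ne_bz _ _ _ habs
        · obtain ⟨hi, hg, -⟩ := bel_inj habs
          have hiv : a = i.val := congrArg Fin.val hi
          subst hg
          rcases hC with ⟨h1, -⟩ | ⟨-, h1, -, -⟩ | ⟨-, -, ⟨h1, -, -⟩ | ⟨-, -, h1⟩⟩ <;>
            first
              | omega
              | exact hgS h1
  · -- new period
    rw [ha's] at han
    rw [ha's, hb's]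
    have hcond : chainCond (n := n) l c' (a + 1) 0 ⟨a + 1, han⟩ (1 : G) ⟨a + 1, han⟩ :=
      Or.inr (Or.inr ⟨rfl, rfl, Or.inr ⟨by omega, by omega, one_mem _⟩⟩)
    refine ⟨bel ⟨a + 1, han⟩ 1 ⟨a + 1, han⟩, Or.inr ⟨_, _, _, rfl, hcond⟩, ?_⟩
    rintro (habs | ⟨i, g', j, habs, hC⟩)
    · exact bel_ne_bz _ _ _ habs
    · obtain ⟨hi, -, -⟩ := bel_inj habs
      have hiv : a + 1 = i.val := congrArg Fin.val hi
      rcases hC with ⟨h1, -⟩ | ⟨-, -, h1, -⟩ | ⟨-, h1, -⟩ <;> omega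

end Strict

section Upper
open Classical
variable {G : Type*} [Group G] [Fintype G] {n : ℕ}

lemma brandt_chain_bound (hn : 0 < n) :
    ∀ k ∈ {k : ℕ | ∃ c : Fin (k + 1) → Subsemigroup (Brandt G n),
      StrictMono c ∧ ∀ i, ((c i : Set (Brandt G n))).Nonempty ∧
        ∀ x ∈ c i, brandtInv x ∈ c i},
      k ≤ n * (subLen (⊤ : Subgroup G) + 2) - 1 := by
  rintro k ⟨c, hc, hprop⟩
  have hinv : ∀ t, IsInv (c t) := fun t => (hprop t).2
  have hW : StrictMono (fun t => W (c t)) := fun a b hab => W_lt (hinv a) (hinv b) (hc hab)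
  have h1 := strictMono_fin_nat hW
  have h2 : 1 ≤ W (c 0) := W_pos (hinv 0) (hprop 0).1
  have h3 : W (c (Fin.last k)) ≤ n * (subLen (⊤ : Subgroup G) + 2) := W_le hn _
  apply Nat.le_sub_one_of_lt
  calc k < W (c 0) + k := by omega
    _ ≤ W (c (Fin.last k)) := h1
    _ ≤ n * (subLen (⊤ : Subgroup G) + 2) := h3

end Upper

section Final
open Classical
variable {G : Type*} [Group G] [Fintype G] {n : ℕ}

lemma brandtInverseLength_lower (hn : 0 < n) :
    n * (subLen (⊤ : Subgroup G) + 2) - 1 ∈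
      {k : ℕ | ∃ c : Fin (k + 1) → Subsemigroup (Brandt G n),
        StrictMono c ∧ ∀ i, ((c i : Set (Brandt G n))).Nonempty ∧
          ∀ x ∈ c i, brandtInv x ∈ c i} := by
  set l := subLen (⊤ : Subgroup G) with hl
  obtain ⟨c, hc, hctop⟩ := subLen_spec (⊤ : Subgroup G)
  set c' : ℕ → Subgroup G := fun m => c ⟨min m l, by omega⟩ with hc'
  have hm : Monotone c' := by
    intro m m' hmm
    exact hc.monotone (by simp [Fin.le_iff_val_le_val]; omega)
  have hsm : ∀ b, b < l → c' b < c' (b + 1) := by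
    intro b hb
    exact hc (by simp [Fin.lt_iff_val_lt_val]; omega)
  have hA : 2 ≤ n * (l + 2) := by
    calc 2 = 1 * 2 := by omega
      _ ≤ n * (l + 2) := Nat.mul_le_mul hn (by omega)
  refine ⟨fun t => chainS l c' (t.val / (l + 2)) (t.val % (l + 2)), ?_, ?_⟩
  · have hk1 : n * (l + 2) - 1 + 1 = n * (l + 2) := by omega
    rw [Fin.strictMono_iff_lt_succ]
    intro i
    have hiv : i.val + 1 ≤ n * (l + 2) - 1 := by
      have := i.isLt
      omega
    have hcs : (Fin.castSucc i).val = i.val := rfl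
    have hss : (Fin.succ i).val = i.val + 1 := rfl
    rw [hcs, hss]
    have hble : i.val % (l + 2) < l + 2 := Nat.mod_lt _ (by omega)
    have hlt : i.val + 1 < n * (l + 2) := by omega
    have han : (i.val + 1) / (l + 2) < n :=
      (Nat.div_lt_iff_lt_mul (by omega : 0 < l + 2)).2 hlt
    by_cases hbe : i.val % (l + 2) = l + 1
    · obtain ⟨hdiv, hmod⟩ := succ_div_mod_of_eq hbe
      exact chainS_lt l c' hm hsm hn _ _ _ _ (Or.inr ⟨hbe, hdiv, hmod⟩) han
    · obtain ⟨hdiv, hmod⟩ := succ_div_mod_of_lt (t := i.val) (l := l) (by omega)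
      exact chainS_lt l c' hm hsm hn _ _ _ _ (Or.inl ⟨by omega, hdiv, hmod⟩) han
  · intro i
    exact ⟨chainS_nonempty _ _ _ _, chainS_isInv _ _ _ _⟩

lemma brandtInverseLength_eq (hn : 0 < n) :
    brandtInverseLength G n = n * (subLen (⊤ : Subgroup G) + 2) - 1 := by
  apply le_antisymm
  · apply csSup_le
    · exact ⟨_, brandtInverseLength_lower hn⟩
    · exact brandt_chain_bound hn
  · exact le_csSup ⟨n * (subLen (⊤ : Subgroup G) + 2) - 1, brandt_chain_bound hn⟩
      (brandtInverseLength_lower hn)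

end Final

/-- Let `G` be a finite group and `n` a positive integer.  Then the inverse subsemigroup
length of the Brandt semigroup `B(G,n)` satisfies `l*(B(G,n)) = n(l(G) + 2) − 1`. -/
theorem inverseLength_brandt (G : Type*) [Group G] [Fintype G] (n : ℕ) (hn : 0 < n) :
    brandtInverseLength G n = n * (groupLength G + 2) - 1 := by
  rw [groupLength_eq_subLen_top]
  exact brandtInverseLength_eq hn
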